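/- arXiv:1012.1094 — 4 statements merged into one kernel-verified Lean document; each statement's English description precedes it below -/
import Mathlib

section
/- Every topological space X whose cardinality is less than the dominating number 𝔡 (i.e., |X| < |D| for every dominating family D ⊆ ω^ω) has property E*_ω. -/
open Set Filter Topology Cardinal

/-- A neighbourhood assignment for a topological space `X`: a function assigning to each
point an open set containing it. -/
def IsNbhdAssignment {X : Type*} [TopologicalSpace X] (N : X → Set X) : Prop :=
  ∀ x : X, IsOpen (N x) ∧ x ∈ N x

/-- `X` is a D-space: for every neighbourhood assignment `N` there is a closed discrete
subset `A` with `⋃ x ∈ A, N x = univ`. -/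
def IsDSpace (X : Type*) [TopologicalSpace X] : Prop :=
  ∀ N : X → Set X, IsNbhdAssignment N →
    ∃ A : Set X, IsClosed A ∧ DiscreteTopology ↥A ∧ ⋃ x ∈ A, N x = Set.univ

/-- Property `D_ω`: for every neighbourhood assignment `N` there is a countable family of
closed discrete sets `A n` with `X = ⋃ n, ⋃ x ∈ A n, N x`. -/
def HasDOmega (X : Type*) [TopologicalSpace X] : Prop :=
  ∀ N : X → Set X, IsNbhdAssignment N →
    ∃ A : ℕ → Set X, (∀ n, IsClosed (A n) ∧ DiscreteTopology ↥(A n)) ∧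
      ⋃ n, ⋃ x ∈ A n, N x = Set.univ

/-- Property `E*_ω` (the Menger property for countable covers): for every sequence of
countable open covers there are finite subfamilies whose overall union covers `X`. -/
def HasEStarOmega (X : Type*) [TopologicalSpace X] : Prop :=
  ∀ u : ℕ → Set (Set X),
    (∀ n, (u n).Countable ∧ (∀ U ∈ u n, IsOpen U) ∧ ⋃₀ u n = Set.univ) →
    ∃ v : ℕ → Set (Set X), (∀ n, v n ⊆ u n ∧ (v n).Finite) ∧
      ⋃ n, ⋃₀ v n = Set.univ

/-- A family of sets is locally finite if every point has a neighbourhood meeting only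
finitely many members of the family. -/
def LocallyFiniteFamily {X : Type*} [TopologicalSpace X] (F : Set (Set X)) : Prop :=
  ∀ x : X, ∃ U ∈ nhds x, {s ∈ F | (s ∩ U).Nonempty}.Finite

/-- A family of sets is locally countable if every point has a neighbourhood meeting at
most countably many members of the family. -/
def LocallyCountableFamily {X : Type*} [TopologicalSpace X] (F : Set (Set X)) : Prop :=
  ∀ x : X, ∃ U ∈ nhds x, {s ∈ F | (s ∩ U).Nonempty}.Countable

/-- `X` is subparacompact: every open cover has a σ-locally finite closed refinement
which is itself a cover. -/
def Subparacompact (X : Type*) [TopologicalSpace X] : Prop :=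
  ∀ u : Set (Set X), (∀ U ∈ u, IsOpen U) → ⋃₀ u = Set.univ →
    ∃ F : ℕ → Set (Set X),
      (∀ n, LocallyFiniteFamily (F n)) ∧
      (∀ n, ∀ s ∈ F n, IsClosed s) ∧
      (∀ n, ∀ s ∈ F n, ∃ U ∈ u, s ⊆ U) ∧
      ⋃₀ (⋃ n, F n) = Set.univ

/-- A family `D ⊆ ω^ω` is dominating if every `f : ℕ → ℕ` is eventually dominated by
some member of `D`. -/
def Dominating (D : Set (ℕ → ℕ)) : Prop :=
  ∀ f : ℕ → ℕ, ∃ g ∈ D, ∀ᶠ n in Filter.atTop, f n ≤ g n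

/-- Every topological space whose cardinality is less than the dominating
number `𝔡` (i.e. `|X| < |D|` for every dominating family `D ⊆ ω^ω`) has property
`E*_ω`. -/
theorem card_lt_d_hasEStarOmega {X : Type u} [TopologicalSpace X]
    (hsmall : ∀ D : Set (ℕ → ℕ), Dominating D →
      Cardinal.mk X < Cardinal.lift.{u} (Cardinal.mk D)) :
    HasEStarOmega X := by
  intro u hu
  by_cases hX : IsEmpty X
  · refine ⟨fun _ => ∅, fun n => ⟨Set.empty_subset _, Set.finite_empty⟩, ?_⟩
    ext x; exact hX.elim x
  rw [not_isEmpty_iff] at hX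
  obtain ⟨x0⟩ := hX
  have hne : ∀ n, (u n).Nonempty := by
    intro n
    have h : x0 ∈ ⋃₀ u n := (hu n).2.2 ▸ Set.mem_univ x0
    obtain ⟨U, hU, _⟩ := h
    exact ⟨U, hU⟩
  choose e he using fun n => ((hu n).1).exists_eq_range (hne n)
  have hmem : ∀ (x : X) (n : ℕ), ∃ k, x ∈ e n k := by
    intro x n
    have h : x ∈ ⋃₀ u n := (hu n).2.2 ▸ Set.mem_univ x
    obtain ⟨U, hU, hxU⟩ := h
    rw [he n] at hU
    obtain ⟨k, rfl⟩ := hU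
    exact ⟨k, hxU⟩
  choose fx hfx using hmem
  have hnd : ¬ Dominating (Set.range fx) := by
    intro hdom
    have h1 := hsmall _ hdom
    have h2 : Cardinal.lift.{u} (Cardinal.mk (Set.range fx)) ≤ Cardinal.mk X := by
      simpa using Cardinal.mk_range_le_lift (f := fx)
    exact absurd (h1.trans_le h2) (lt_irrefl _)
  rw [Dominating] at hnd
  push_neg at hnd
  obtain ⟨f, hf⟩ := hnd
  refine ⟨fun n => e n '' Set.Iic (f n), fun n => ⟨?_, (Set.finite_Iic _).image _⟩, ?_⟩
  · rw [he n]; exact Set.image_subset_range _ _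
  · apply Set.eq_univ_of_forall
    intro x
    have h := hf (fx x) ⟨x, rfl⟩
    obtain ⟨n, hn⟩ := h.exists
    exact Set.mem_iUnion.2 ⟨n, ⟨e n (fx x n), ⟨fx x n, le_of_lt hn, rfl⟩, hfx x n⟩⟩
end

section
/- If there exists a Michael space, then every productively Lindelöf regular topological space has the Menger property (equivalently, property E*_ω). -/
open Set Filter Topology Cardinal

theorem cyl_sub (A : Set (ℕ → ℕ)) (hA : IsOpen A) (g : ℕ → ℕ) (hg : g ∈ A) :
    ∃ m : ℕ, {b : ℕ → ℕ | ∀ i < m, b i = g i} ⊆ A := by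
  have h1 : A ∈ nhds g := hA.mem_nhds hg
  rw [nhds_pi, Filter.mem_pi] at h1
  obtain ⟨I, hI, t, ht, hsub⟩ := h1
  obtain ⟨m, hm⟩ := hI.bddAbove
  refine ⟨m + 1, fun b hb => hsub fun i hi => ?_⟩
  have : b i = g i := hb i (Nat.lt_succ_of_le (hm hi))
  rw [this]
  exact mem_of_mem_nhds (ht i)

theorem kf_compact (f : ℕ → ℕ) : IsCompact {g : ℕ → ℕ | ∀ i, g i ≤ f i} := by
  have h : {g : ℕ → ℕ | ∀ i, g i ≤ f i} = Set.pi Set.univ (fun i => Set.Iic (f i)) := by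
    ext g; simp [Set.mem_pi, Pi.le_def]
  rw [h]
  exact isCompact_univ_pi fun i => (Set.finite_Iic _).isCompact

theorem nfn_sub (A : Set (ℕ → ℕ)) (hA : IsOpen A) (f : ℕ → ℕ)
    (hK : {g : ℕ → ℕ | ∀ i, g i ≤ f i} ⊆ A) :
    ∃ n : ℕ, {g : ℕ → ℕ | ∀ i < n, g i ≤ f i} ⊆ A := by
  have hch : ∀ g ∈ {g : ℕ → ℕ | ∀ i, g i ≤ f i}, ∃ m : ℕ,
      {b : ℕ → ℕ | ∀ i < m, b i = g i} ⊆ A := fun g hg => cyl_sub A hA g (hK hg)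
  choose! m hm using hch
  obtain ⟨T, hTmem, hTcov⟩ := (kf_compact f).elim_nhds_subcover
    (fun g => {b : ℕ → ℕ | ∀ i < m g, b i = g i})
    (fun g _ => by
      show {b : ℕ → ℕ | ∀ i < m g, b i = g i} ∈ nhds g
      refine IsOpen.mem_nhds ?_ (fun i _ => rfl)
      have h : {b : ℕ → ℕ | ∀ i < m g, b i = g i}
          = ⋂ i ∈ Finset.Iio (m g), (fun b : ℕ → ℕ => b i) ⁻¹' {g i} := by
        ext b; simp
      rw [h]
      exact isOpen_biInter_finset fun i _ =>
        (continuous_apply i).isOpen_preimage _ (isOpen_discrete _))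
  refine ⟨T.sup m, fun h hh => ?_⟩
  set h' : ℕ → ℕ := fun i => min (h i) (f i) with hh'
  have hmem : h' ∈ {g : ℕ → ℕ | ∀ i, g i ≤ f i} := fun i => min_le_right _ _
  obtain ⟨g, hgT, hg⟩ := Set.mem_iUnion₂.mp (hTcov hmem)
  have hmg : m g ≤ T.sup m := Finset.le_sup hgT
  have hcyl : h ∈ {b : ℕ → ℕ | ∀ i < m g, b i = g i} := by
    intro i hi
    have hif : h i ≤ f i := hh i (lt_of_lt_of_le hi hmg)
    have heq : h' i = g i := hg i hi
    rw [← heq, hh']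
    simp [min_eq_left hif]
  exact hm g (hTmem g hgT) hcyl


/-- If there exists a Michael space (a regular Lindelöf space `Y` with
`ω^ω × Y` not Lindelöf), then every productively Lindelöf regular space has the Menger
property `E*_ω`. -/
theorem michael_space_implies_productively_lindelof_menger
    (hMichael : ∃ (Y : Type) (_ : TopologicalSpace Y), RegularSpace Y ∧
      LindelofSpace Y ∧ ¬ LindelofSpace ((ℕ → ℕ) × Y))
    {X : Type*} [TopologicalSpace X] [RegularSpace X]
    (hPL : ∀ (Y : Type) (_ : TopologicalSpace Y), RegularSpace Y → LindelofSpace Y →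
      LindelofSpace (X × Y)) :
    HasEStarOmega X := by
  intro u hu
  by_cases hXne : Nonempty X
  swap
  · have hempty : IsEmpty X := not_nonempty_iff.mp hXne
    refine ⟨fun _ => ∅, fun n => ⟨Set.empty_subset _, Set.finite_empty⟩, ?_⟩
    simp [Set.eq_empty_of_isEmpty (Set.univ : Set X)]
  by_contra hcon
  obtain ⟨Y, tY, hreg, hlin, hnl⟩ := hMichael
  have hXY : LindelofSpace (X × Y) := hPL Y tY hreg hlin
  -- enumerate the covers
  have hUex : ∀ n : ℕ, ∃ U : ℕ → Set X, u n = Set.range U := by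
    intro n
    refine (hu n).1.exists_eq_range ?_
    rcases hXne with ⟨x⟩
    have hx : x ∈ ⋃₀ u n := by rw [(hu n).2.2]; trivial
    obtain ⟨s, hs, -⟩ := hx
    exact ⟨s, hs⟩
  choose U hUeq using hUex
  set V : ℕ → ℕ → Set X := fun n k => ⋃ i ∈ Set.Iic k, U n i with hV
  have hVopen : ∀ n k, IsOpen (V n k) := by
    intro n k
    refine isOpen_biUnion fun i _ => ?_
    exact (hu n).2.1 _ (by rw [hUeq n]; exact Set.mem_range_self i)
  have hVmono : ∀ n (k k' : ℕ), k ≤ k' → V n k ⊆ V n k' := by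
    intro n k k' hk
    exact Set.biUnion_subset_biUnion_left (Set.Iic_subset_Iic.mpr hk)
  have hVmem : ∀ (x : X) (n : ℕ), ∃ k, x ∈ V n k := by
    intro x n
    have hx : x ∈ ⋃₀ u n := by rw [(hu n).2.2]; trivial
    obtain ⟨s, hs, hxs⟩ := hx
    rw [hUeq n] at hs
    obtain ⟨i, rfl⟩ := hs
    exact ⟨i, Set.mem_biUnion (Set.mem_Iic.mpr le_rfl) hxs⟩
  -- failing Menger gives strong domination
  have hdom : ∀ f : ℕ → ℕ, ∃ x : X, ∀ n, x ∉ V n (f n) := by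
    intro f
    by_contra h
    push_neg at h
    apply hcon
    refine ⟨fun n => U n '' Set.Iic (f n), fun n => ⟨?_, (Set.finite_Iic _).image _⟩, ?_⟩
    · rw [hUeq n]; exact Set.image_subset_range _ _
    · ext x
      simp only [Set.mem_univ, iff_true, Set.mem_iUnion]
      obtain ⟨n, hn⟩ := h x
      obtain ⟨i, hi, hxi⟩ := Set.mem_iUnion₂.mp hn
      exact ⟨n, U n i, Set.mem_image_of_mem _ hi, hxi⟩
  -- selection of covering indices
  have hsel : ∀ x : X, ∃ f : ℕ → ℕ, ∀ n, x ∈ V n (f n) := by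
    intro x
    choose f hf using hVmem x
    exact ⟨f, hf⟩
  choose sel hselp using hsel
  -- contradiction: (ℕ → ℕ) × Y is Lindelöf
  apply hnl
  constructor
  apply isLindelof_of_countable_subcover
  intro ι 𝒰 h𝒰open h𝒰cov
  classical
  set N : (ℕ → ℕ) → ℕ → Set (ℕ → ℕ) := fun f n => {g | ∀ i < n, g i ≤ f i} with hN
  set J := {q : (ℕ → ℕ) × ℕ × Set Y × Finset ι //
      IsOpen q.2.2.1 ∧ (N q.1 q.2.1) ×ˢ q.2.2.1 ⊆ ⋃ i ∈ q.2.2.2, 𝒰 i} with hJ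
  set W : J → Set (X × Y) := fun q =>
      {x : X | ∀ i < q.1.2.1, x ∈ V i (q.1.1 i)} ×ˢ q.1.2.2.1 with hW
  have hWopen : ∀ q, IsOpen (W q) := by
    intro q
    refine IsOpen.prod ?_ q.2.1
    have h : {x : X | ∀ i < q.1.2.1, x ∈ V i (q.1.1 i)}
        = ⋂ i ∈ Finset.Iio q.1.2.1, V i (q.1.1 i) := by
      ext x; simp
    rw [h]
    exact isOpen_biInter_finset fun i _ => hVopen _ _
  have hWcov : (Set.univ : Set (X × Y)) ⊆ ⋃ q, W q := by
    rintro ⟨x, y⟩ -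
    set f := sel x with hf
    have hKsub : {g : ℕ → ℕ | ∀ i, g i ≤ f i} ×ˢ ({y} : Set Y) ⊆ ⋃ i, 𝒰 i := fun p _ =>
      h𝒰cov (Set.mem_univ p)
    obtain ⟨t, ht⟩ := ((kf_compact f).prod isCompact_singleton).elim_finite_subcover
      𝒰 h𝒰open hKsub
    obtain ⟨A, B, hAopen, hBopen, hKA, hyB, hABsub⟩ := generalized_tube_lemma
      (kf_compact f) (isCompact_singleton (x := y))
      (isOpen_biUnion fun i _ => h𝒰open i) ht
    have hKA' : {g : ℕ → ℕ | ∀ i, g i ≤ f i} ⊆ A := hKA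
    obtain ⟨n, hn⟩ := nfn_sub A hAopen f hKA'
    refine Set.mem_iUnion.mpr ⟨⟨(f, n, B, t), hBopen, ?_⟩, ?_⟩
    · exact fun p hp => hABsub ⟨hn hp.1, hp.2⟩
    · exact ⟨fun i _ => hselp x i, hyB rfl⟩
  obtain ⟨r, hrc, hrcov⟩ := hXY.isLindelof_univ.elim_countable_subcover W hWopen hWcov
  refine ⟨⋃ q ∈ r, (q.1.2.2.2 : Set ι), hrc.biUnion fun q _ => (q.1.2.2.2).countable_toSet, ?_⟩
  rintro ⟨g, y⟩ -
  obtain ⟨x, hx⟩ := hdom g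
  obtain ⟨q, hqr, hq⟩ := Set.mem_iUnion₂.mp (hrcov (Set.mem_univ (x, y)))
  have hgN : g ∈ N q.1.1 q.1.2.1 := by
    intro i hi
    by_contra hgi
    push_neg at hgi
    exact hx i (hVmono i (q.1.1 i) (g i) (le_of_lt hgi) (hq.1 i hi))
  have hmem : (g, y) ∈ ⋃ i ∈ q.1.2.2.2, 𝒰 i := q.2.2 ⟨hgN, hq.2⟩
  obtain ⟨i, hit, hgy⟩ := Set.mem_iUnion₂.mp hmem
  exact Set.mem_iUnion₂.mpr ⟨i, Set.mem_biUnion hqr hit, hgy⟩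
end

section
/- If there exist a Michael space and a productively Lindelöf regular topological space X without the Menger property, then X × Y fails to be Lindelöf for some regular Lindelöf space Y; equivalently: if Y is a Michael space and X is a regular space that does not have the Menger property but admits a compact-valued upper semicontinuous set-valued map Φ : X ⇒ ω^ω with Φ(X) = ω^ω, then X × Y is not Lindelöf. -/
open Set Filter Topology Cardinal

/-- If `Y` is a Michael space (regular Lindelöf with `ω^ω × Y` not
Lindelöf) and `X` is a regular space without the Menger property admitting a
compact-valued upper semicontinuous map `Φ : X ⇒ ω^ω` with `Φ(X) = ω^ω`, then `X × Y`
is not Lindelöf. -/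
theorem not_lindelof_prod_of_michael {X Y : Type*} [TopologicalSpace X] [RegularSpace X]
    [TopologicalSpace Y] [RegularSpace Y] [LindelofSpace Y]
    (hMichael : ¬ LindelofSpace ((ℕ → ℕ) × Y))
    (hnoMenger : ¬ HasEStarOmega X)
    (Φ : X → Set (ℕ → ℕ))
    (hcomp : ∀ x, IsCompact (Φ x))
    (husc : ∀ V : Set (ℕ → ℕ), IsOpen V → IsOpen {x | Φ x ⊆ V})
    (hsurj : ⋃ x, Φ x = Set.univ) :
    ¬ LindelofSpace (X × Y) := by
  intro hXY
  apply hMichael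
  constructor
  apply isLindelof_of_countable_subcover
  intro ι U hUo hUc
  -- the compact-valued usc map Ψ : X × Y ⇒ ω^ω × Y
  set Ψ : X × Y → Set ((ℕ → ℕ) × Y) := fun p => (Φ p.1) ×ˢ ({p.2} : Set Y) with hΨdef
  have hΨcomp : ∀ p, IsCompact (Ψ p) := fun p => (hcomp p.1).prod isCompact_singleton
  -- choose a finite subcover of each Ψ p
  have hfin : ∀ p : X × Y, ∃ t : Finset ι, Ψ p ⊆ ⋃ i ∈ t, U i := by
    intro p
    exact (hΨcomp p).elim_finite_subcover U hUo (fun z _ => hUc (mem_univ z))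
  choose t ht using hfin
  set W : X × Y → Set ((ℕ → ℕ) × Y) := fun p => ⋃ i ∈ t p, U i with hWdef
  have hWopen : ∀ p, IsOpen (W p) := fun p => isOpen_biUnion fun i _ => hUo i
  -- V p is the preimage of W p under Ψ; it is open by the tube lemma and usc of Φ
  set V : X × Y → Set (X × Y) := fun p => {q | Ψ q ⊆ W p} with hVdef
  have hVopen : ∀ p, IsOpen (V p) := by
    intro p
    rw [isOpen_iff_forall_mem_open]
    intro q hq
    obtain ⟨u, v, huo, hvo, hΦu, hqv, huv⟩ :=
      generalized_tube_lemma (hcomp q.1) (isCompact_singleton (x := q.2)) (hWopen p) hq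
    refine ⟨{x | Φ x ⊆ u} ×ˢ v, ?_, (husc u huo).prod hvo, ?_⟩
    · rintro ⟨x, y⟩ ⟨hx, hy⟩
      exact fun z hz => huv ⟨hx hz.1, by rw [show z.2 = y from hz.2]; exact hy⟩
    · exact ⟨hΦu, hqv rfl⟩
  have hVmem : ∀ p, p ∈ V p := fun p => ht p
  -- use Lindelöfness of X × Y
  obtain ⟨r, hrc, hrcov⟩ := hXY.isLindelof_univ.elim_countable_subcover V hVopen
    (fun p _ => mem_iUnion.2 ⟨p, hVmem p⟩)
  refine ⟨⋃ p ∈ r, (↑(t p) : Set ι), hrc.biUnion fun p _ => (t p).countable_toSet, ?_⟩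
  rintro ⟨f, y⟩ -
  have hf : f ∈ ⋃ x, Φ x := hsurj ▸ mem_univ f
  obtain ⟨x, hx⟩ := mem_iUnion.1 hf
  have hq : ((f, y) : (ℕ → ℕ) × Y) ∈ Ψ (x, y) := ⟨hx, rfl⟩
  obtain ⟨p, hpr, hpV⟩ := mem_iUnion₂.1 (hrcov (mem_univ (x, y)))
  obtain ⟨i, hit, hiU⟩ := mem_iUnion₂.1 (hpV hq)
  exact mem_iUnion₂.2 ⟨i, mem_iUnion₂.2 ⟨p, hpr, hit⟩, hiU⟩
end

section
/- Let X be a topological space and let F be a locally finite family of closed subsets of X, each of which is a D-space in the subspace topology. Then the union ⋃F is a closed subset of X which is a D-space in the subspace topology. -/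
open Set Filter Topology Cardinal

section Aux
variable {Z : Type*} [TopologicalSpace Z]

lemma sep_of_discrete {A : Set Z} (hd : DiscreteTopology ↥A) {a : Z} (ha : a ∈ A) :
    ∃ U : Set Z, IsOpen U ∧ U ∩ A = {a} := by
  have h1 : IsOpen ({⟨a, ha⟩} : Set ↥A) := isOpen_discrete _
  rw [isOpen_induced_iff] at h1
  obtain ⟨U, hU, hpre⟩ := h1
  refine ⟨U, hU, ?_⟩
  ext z
  constructor
  · rintro ⟨hzU, hzA⟩
    have h2 : (⟨z, hzA⟩ : ↥A) ∈ Subtype.val ⁻¹' U := hzU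
    rw [hpre] at h2
    simpa using congrArg Subtype.val (mem_singleton_iff.mp h2)
  · intro hz
    rw [mem_singleton_iff] at hz
    subst hz
    have h2 : (⟨z, ha⟩ : ↥A) ∈ Subtype.val ⁻¹' U := by rw [hpre]; rfl
    exact ⟨h2, ha⟩

lemma discrete_of_sep {A : Set Z}
    (h : ∀ a ∈ A, ∃ U : Set Z, IsOpen U ∧ U ∩ A = {a}) : DiscreteTopology ↥A := by
  rw [discreteTopology_iff_isOpen_singleton]
  rintro ⟨a, ha⟩
  obtain ⟨U, hU, hUA⟩ := h a ha
  have heq : ({⟨a, ha⟩} : Set ↥A) = Subtype.val ⁻¹' U := by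
    ext ⟨z, hz⟩
    simp only [mem_singleton_iff, mem_preimage, Subtype.mk.injEq]
    constructor
    · intro hz
      subst hz
      have h2 : z ∈ U ∩ A := by rw [hUA]; rfl
      exact h2.1
    · intro hzU
      have h2 : z ∈ U ∩ A := ⟨hzU, hz⟩
      rw [hUA] at h2; exact h2
  rw [heq]; exact hU.preimage continuous_subtype_val

/-- Ambient form of the D-property relative to one open assignment. -/
def AmbD (O : Z → Set Z) (s : Set Z) : Prop :=
  ∃ A : Set Z, A ⊆ s ∧ IsClosed A ∧ DiscreteTopology ↥A ∧ s ⊆ ⋃ x ∈ A, O x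

lemma ambD_of_isDSpace {s : Set Z} (hs : IsClosed s) (hDs : IsDSpace ↥s)
    (O : Z → Set Z) (hO : ∀ x ∈ s, IsOpen (O x) ∧ x ∈ O x) : AmbD O s := by
  set N : ↥s → Set ↥s := fun y => Subtype.val ⁻¹' O ↑y with hN
  have hNa : IsNbhdAssignment N := fun y =>
    ⟨((hO _ y.2).1).preimage continuous_subtype_val, (hO _ y.2).2⟩
  obtain ⟨A₀, hA₀c, hA₀d, hA₀u⟩ := hDs N hNa
  refine ⟨Subtype.val '' A₀, ?_, ?_, ?_, ?_⟩
  · rintro _ ⟨y, _, rfl⟩; exact y.2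
  · exact hs.isClosedEmbedding_subtypeVal.isClosedMap _ hA₀c
  · apply discrete_of_sep
    rintro _ ⟨y, hy, rfl⟩
    obtain ⟨V, hVo, hVA⟩ := sep_of_discrete hA₀d hy
    rw [isOpen_induced_iff] at hVo
    obtain ⟨U, hUo, hUV⟩ := hVo
    refine ⟨U, hUo, ?_⟩
    ext z
    constructor
    · rintro ⟨hzU, w, hw, rfl⟩
      have h2 : w ∈ V ∩ A₀ := ⟨by rw [← hUV]; exact hzU, hw⟩
      rw [hVA] at h2
      exact congrArg Subtype.val (mem_singleton_iff.mp h2)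
    · rintro rfl
      have h2 : y ∈ V ∩ A₀ := by rw [hVA]; rfl
      have h3 : y ∈ Subtype.val ⁻¹' U := by rw [hUV]; exact h2.1
      exact ⟨h3, y, hy, rfl⟩
  · intro x hx
    have h2 : (⟨x, hx⟩ : ↥s) ∈ ⋃ y ∈ A₀, N y := by rw [hA₀u]; trivial
    obtain ⟨y, hy, hmem⟩ := mem_iUnion₂.mp h2
    exact mem_biUnion (mem_image_of_mem _ hy) hmem

lemma ambD_subset {s t : Set Z}
    (hall : ∀ O : Z → Set Z, (∀ x ∈ s, IsOpen (O x) ∧ x ∈ O x) → AmbD O s)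
    (ht : IsClosed t) (hts : t ⊆ s)
    (O : Z → Set Z) (hO : ∀ x ∈ t, IsOpen (O x) ∧ x ∈ O x) : AmbD O t := by
  classical
  set O' : Z → Set Z := fun x => if x ∈ t then O x else tᶜ with hO'
  have hO'good : ∀ x ∈ s, IsOpen (O' x) ∧ x ∈ O' x := by
    intro x hx
    by_cases h : x ∈ t
    · simp only [hO', if_pos h]; exact hO x h
    · simp only [hO', if_neg h]; exact ⟨ht.isOpen_compl, h⟩
  obtain ⟨A, hAs, hAc, hAd, hAcov⟩ := hall O' hO'good
  refine ⟨A ∩ t, inter_subset_right, hAc.inter ht, ?_, ?_⟩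
  · apply discrete_of_sep
    rintro a ⟨haA, hat⟩
    obtain ⟨U, hUo, hUA⟩ := sep_of_discrete hAd haA
    refine ⟨U, hUo, ?_⟩
    apply Subset.antisymm
    · rintro z ⟨hzU, hzA, _⟩
      rw [← hUA]; exact ⟨hzU, hzA⟩
    · intro z hz
      rw [mem_singleton_iff] at hz
      subst hz
      have h2 : z ∈ U ∩ A := by rw [hUA]; rfl
      exact ⟨h2.1, h2.2, hat⟩
  · intro y hy
    obtain ⟨x, hxA, hmem⟩ := mem_iUnion₂.mp (hAcov (hts hy))
    by_cases h : x ∈ t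
    · simp only [hO', if_pos h] at hmem
      exact mem_biUnion ⟨hxA, h⟩ hmem
    · simp only [hO', if_neg h] at hmem
      exact absurd hy hmem

lemma isDSpace_of_ambD {s : Set Z} (hs : IsClosed s)
    (h : ∀ O : Z → Set Z, (∀ x ∈ s, IsOpen (O x) ∧ x ∈ O x) → AmbD O s) :
    IsDSpace ↥s := by
  classical
  intro N hN
  have hch : ∀ y : ↥s, ∃ U : Set Z, IsOpen U ∧ Subtype.val ⁻¹' U = N y := fun y =>
    isOpen_induced_iff.mp (hN y).1
  choose O' hO'open hO'pre using hch
  set O : Z → Set Z := fun x => if hx : x ∈ s then O' ⟨x, hx⟩ else univ with hOdef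
  have hO : ∀ x ∈ s, IsOpen (O x) ∧ x ∈ O x := by
    intro x hx
    simp only [hOdef, dif_pos hx]
    refine ⟨hO'open _, ?_⟩
    have h2 := (hN ⟨x, hx⟩).2
    rw [← hO'pre ⟨x, hx⟩] at h2
    exact h2
  obtain ⟨A, hAs, hAc, hAd, hAcov⟩ := h O hO
  refine ⟨Subtype.val ⁻¹' A, hAc.preimage continuous_subtype_val, ?_, ?_⟩
  · apply discrete_of_sep
    rintro ⟨a, has⟩ haA
    obtain ⟨U, hUo, hUA⟩ := sep_of_discrete hAd haA
    refine ⟨Subtype.val ⁻¹' U, hUo.preimage continuous_subtype_val, ?_⟩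
    ext ⟨z, hzs⟩
    simp only [mem_inter_iff, mem_preimage, mem_singleton_iff, Subtype.mk.injEq]
    constructor
    · rintro ⟨hzU, hzA⟩
      have h2 : z ∈ U ∩ A := ⟨hzU, hzA⟩
      rw [hUA] at h2; exact h2
    · rintro rfl
      have h2 : z ∈ U ∩ A := by rw [hUA]; rfl
      exact ⟨h2.1, h2.2⟩
  · apply eq_univ_of_forall
    intro z
    obtain ⟨x, hxA, hmem⟩ := mem_iUnion₂.mp (hAcov z.2)
    have hxs : x ∈ s := hAs hxA
    simp only [hOdef, dif_pos hxs] at hmem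
    refine mem_iUnion₂.mpr ⟨⟨x, hxs⟩, hxA, ?_⟩
    rw [← hO'pre ⟨x, hxs⟩]
    exact hmem

end Aux

/-- The union of a locally finite family of closed D-subspaces is a closed
D-subspace. -/
theorem locallyFinite_union_closed_dSpaces {X : Type*} [TopologicalSpace X]
    (F : Set (Set X)) (hlf : LocallyFiniteFamily F)
    (hcl : ∀ s ∈ F, IsClosed s) (hD : ∀ s ∈ F, IsDSpace ↥s) :
    IsClosed (⋃₀ F) ∧ IsDSpace ↥(⋃₀ F) := by
  classical
  have hlf' : ∀ x : X, ∃ W : Set X, IsOpen W ∧ x ∈ W ∧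
      {i : ↥F | ((i : Set X) ∩ W).Nonempty}.Finite := by
    intro x
    obtain ⟨W₀, hW₀, hfin⟩ := hlf x
    obtain ⟨W, hWsub, hWopen, hxW⟩ := mem_nhds_iff.mp hW₀
    refine ⟨W, hWopen, hxW, ?_⟩
    have hsub : {i : ↥F | ((i : Set X) ∩ W).Nonempty} ⊆
        Subtype.val ⁻¹' {s ∈ F | (s ∩ W₀).Nonempty} := by
      rintro i ⟨z, hz1, hz2⟩
      exact ⟨i.2, z, hz1, hWsub hz2⟩
    exact ((hfin.preimage Subtype.val_injective.injOn)).subset hsub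
  have hclosed : IsClosed (⋃₀ F) := by
    rw [sUnion_eq_iUnion]
    refine LocallyFinite.isClosed_iUnion ?_ (fun i => hcl _ i.2)
    intro x
    obtain ⟨W, hWo, hxW, hfin⟩ := hlf' x
    exact ⟨W, hWo.mem_nhds hxW, hfin⟩
  refine ⟨hclosed, ?_⟩
  apply isDSpace_of_ambD hclosed
  intro O hO
  have hAll : ∀ i : ↥F, ∀ O' : X → Set X,
      (∀ x ∈ (i : Set X), IsOpen (O' x) ∧ x ∈ O' x) → AmbD O' (i : Set X) :=
    fun i => ambD_of_isDSpace (hcl _ i.2) (hD _ i.2)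
  -- total chooser
  have hT : ∀ (i : ↥F) (t : Set X), ∃ A : Set X,
      A ⊆ t ∧ IsClosed A ∧ DiscreteTopology ↥A ∧
      (IsClosed t → t ⊆ (i : Set X) → t ⊆ ⋃ x ∈ A, O x) := by
    intro i t
    by_cases h : IsClosed t ∧ t ⊆ (i : Set X)
    · have hOgood : ∀ x ∈ t, IsOpen (O x) ∧ x ∈ O x :=
        fun x hx => hO x ⟨(i : Set X), i.2, h.2 hx⟩
      obtain ⟨A, h1, h2, h3, h4⟩ := ambD_subset (hAll i) h.1 h.2 O hOgood
      exact ⟨A, h1, h2, h3, fun _ _ => h4⟩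
    · refine ⟨∅, empty_subset _, isClosed_empty,
        discrete_of_sep (fun a ha => absurd ha (notMem_empty a)),
        fun h1 h2 => absurd ⟨h1, h2⟩ h⟩
  choose pick hsub hclA hdiscA hcovA using hT
  have hwf : WellFounded (WellOrderingRel : ↥F → ↥F → Prop) := IsWellFounded.wf
  obtain ⟨A, hAeq⟩ : ∃ A : ↥F → Set X, ∀ i, A i =
      pick i ((i : Set X) \ ⋃ j, ⋃ (_ : WellOrderingRel j i), ⋃ x ∈ A j, O x) := by
    refine ⟨hwf.fix (fun i rec =>
      pick i ((i : Set X) \ ⋃ j, ⋃ (h : WellOrderingRel j i), ⋃ x ∈ rec j h, O x)),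
      fun i => ?_⟩
    rw [WellFounded.fix_eq]
  set U : ↥F → Set X := fun i => ⋃ j, ⋃ (_ : WellOrderingRel j i), ⋃ x ∈ A j, O x with hU
  have hAsub : ∀ i, A i ⊆ (i : Set X) \ U i := fun i => by
    rw [hAeq]; exact hsub _ _
  have hAsubF : ∀ i, A i ⊆ ⋃₀ F := fun i x hx => ⟨_, i.2, (hAsub i hx).1⟩
  have hUopen : ∀ i, IsOpen (U i) := fun i =>
    isOpen_iUnion fun j => isOpen_iUnion fun _ =>
      isOpen_biUnion fun x hx => (hO x (hAsubF j hx)).1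
  have htcl : ∀ i : ↥F, IsClosed ((i : Set X) \ U i) := fun i =>
    (hcl (i : Set X) i.2).sdiff (hUopen i)
  have hAcov : ∀ i : ↥F, (i : Set X) \ U i ⊆ ⋃ x ∈ A i, O x := fun i => by
    rw [hAeq]; exact hcovA _ _ (htcl i) diff_subset
  have hAclosed : ∀ i, IsClosed (A i) := fun i => by rw [hAeq]; exact hclA _ _
  have hAdisc : ∀ i, DiscreteTopology ↥(A i) := fun i => by rw [hAeq]; exact hdiscA _ _
  have hdisj : ∀ i j, WellOrderingRel j i → ∀ x, x ∈ A i → x ∈ A j → False := by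
    intro i j hr x hxi hxj
    have hx1 : x ∈ U i := mem_iUnion.mpr ⟨j, mem_iUnion.mpr
      ⟨hr, mem_biUnion hxj (hO x (hAsubF j hxj)).2⟩⟩
    exact (hAsub i hxi).2 hx1
  have hdisj' : ∀ i j, i ≠ j → ∀ x, x ∈ A i → x ∈ A j → False := by
    intro i j hne x hxi hxj
    rcases trichotomous_of WellOrderingRel i j with h | h | h
    · exact hdisj j i h x hxj hxi
    · exact hne h
    · exact hdisj i j h x hxi hxj
  have hloc : ∀ x : X, ∃ W : Set X, IsOpen W ∧ x ∈ W ∧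
      {i : ↥F | (A i ∩ W).Nonempty}.Finite := by
    intro x
    obtain ⟨W, hWo, hxW, hfin⟩ := hlf' x
    refine ⟨W, hWo, hxW, hfin.subset ?_⟩
    rintro i ⟨z, hz1, hz2⟩
    exact ⟨z, (hAsub i hz1).1, hz2⟩
  refine ⟨⋃ i, A i, ?_, ?_, ?_, ?_⟩
  · intro x hx
    obtain ⟨i, hi⟩ := mem_iUnion.mp hx
    exact hAsubF i hi
  · -- closedness
    apply isClosed_of_closure_subset
    intro x hx
    obtain ⟨W, hWo, hxW, hfin⟩ := hloc x
    have h1 : x ∈ closure (W ∩ ⋃ i, A i) := hWo.inter_closure ⟨hxW, hx⟩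
    have h2 : W ∩ ⋃ i, A i ⊆ ⋃ i ∈ {i : ↥F | (A i ∩ W).Nonempty}, A i := by
      rintro z ⟨hzW, hz⟩
      obtain ⟨i, hi⟩ := mem_iUnion.mp hz
      exact mem_biUnion (show (A i ∩ W).Nonempty from ⟨z, hi, hzW⟩) hi
    have h3 : IsClosed (⋃ i ∈ {i : ↥F | (A i ∩ W).Nonempty}, A i) :=
      hfin.isClosed_biUnion (fun i _ => hAclosed i)
    have h4 := h3.closure_subset ((closure_mono h2) h1)
    obtain ⟨i, _, hi⟩ := mem_iUnion₂.mp h4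
    exact mem_iUnion.mpr ⟨i, hi⟩
  · -- discreteness
    apply discrete_of_sep
    intro a ha
    obtain ⟨i₀, hi₀⟩ := mem_iUnion.mp ha
    obtain ⟨W, hWo, haW, hfin⟩ := hloc a
    obtain ⟨V, hVo, hVA⟩ := sep_of_discrete (hAdisc i₀) hi₀
    have hBfin : ({i : ↥F | (A i ∩ W).Nonempty} \ {i₀}).Finite := hfin.subset diff_subset
    have hB : IsClosed (⋃ i ∈ {i : ↥F | (A i ∩ W).Nonempty} \ {i₀}, A i) :=
      hBfin.isClosed_biUnion (fun i _ => hAclosed i)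
    refine ⟨(W ∩ V) \ ⋃ i ∈ {i : ↥F | (A i ∩ W).Nonempty} \ {i₀}, A i,
      (hWo.inter hVo).sdiff hB, ?_⟩
    apply Subset.antisymm
    · rintro z ⟨⟨⟨hzW, hzV⟩, hzB⟩, hzA⟩
      obtain ⟨j, hj⟩ := mem_iUnion.mp hzA
      have hjT : j ∈ {i : ↥F | (A i ∩ W).Nonempty} := show (A j ∩ W).Nonempty from ⟨z, hj, hzW⟩
      by_cases hji : j = i₀
      · subst hji
        have h2 : z ∈ V ∩ A j := ⟨hzV, hj⟩
        rw [hVA] at h2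
        exact h2
      · have hjmem : j ∈ {i : ↥F | (A i ∩ W).Nonempty} \ {i₀} := ⟨hjT, hji⟩
        exact absurd (mem_biUnion hjmem hj) hzB
    · intro z hz
      rw [mem_singleton_iff] at hz
      subst hz
      have haV : z ∈ V := by
        have h2 : z ∈ V ∩ A i₀ := by rw [hVA]; rfl
        exact h2.1
      have haB : z ∉ ⋃ i ∈ {i : ↥F | (A i ∩ W).Nonempty} \ {i₀}, A i := by
        intro hB'
        obtain ⟨j, hjT, hj⟩ := mem_iUnion₂.mp hB'
        exact hdisj' i₀ j (fun h => hjT.2 h.symm) z hi₀ hj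
      exact ⟨⟨⟨haW, haV⟩, haB⟩, mem_iUnion.mpr ⟨i₀, hi₀⟩⟩
  · -- coverage
    rintro x ⟨s, hsF, hxs⟩
    have hxs' : x ∈ ((⟨s, hsF⟩ : ↥F) : Set X) := hxs
    by_cases hx : x ∈ U ⟨s, hsF⟩
    · rw [hU] at hx
      obtain ⟨j, hj⟩ := mem_iUnion.mp hx
      obtain ⟨_, hmem⟩ := mem_iUnion.mp hj
      obtain ⟨y, hy, hxy⟩ := mem_iUnion₂.mp hmem
      have hymem : y ∈ ⋃ i, A i := mem_iUnion.mpr ⟨j, hy⟩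
      exact mem_biUnion hymem hxy
    · have h2 : x ∈ ((⟨s, hsF⟩ : ↥F) : Set X) \ U ⟨s, hsF⟩ := ⟨hxs', hx⟩
      obtain ⟨y, hy, hxy⟩ := mem_iUnion₂.mp (hAcov ⟨s, hsF⟩ h2)
      have hymem : y ∈ ⋃ i, A i := mem_iUnion.mpr ⟨⟨s, hsF⟩, hy⟩
      exact mem_biUnion hymem hxy
end
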